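/- For the wheel $W_4$ (a 4-cycle plus a hub adjacent to all four cycle vertices, order 5), $rx_3(W_4) = 3$. -/

import Mathlib

open SimpleGraph

/-- An edge-coloring `c` is a `k`-rainbow coloring of `G` if every `k`-set of vertices
is contained in a rainbow tree: a subgraph of `G` that is a tree, contains the `k` vertices,
and whose edges receive pairwise distinct colors. -/
def IsRainbowColoring {V : Type*} [Fintype V] (G : SimpleGraph V) {α : Type*}
    (c : Sym2 V → α) (k : ℕ) : Prop :=
  ∀ S : Finset V, S.card = k →
    ∃ T : G.Subgraph, (↑S : Set V) ⊆ T.verts ∧ T.coe.IsTree ∧ Set.InjOn c T.edgeSet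

/-- The `k`-rainbow index of `G`: the minimum number of colors in a `k`-rainbow coloring. -/
noncomputable def rxk {V : Type*} [Fintype V] (G : SimpleGraph V) (k : ℕ) : ℕ :=
  sInf {q | ∃ c : Sym2 V → Fin q, IsRainbowColoring G c k}

/-- The wheel `W₄`: the 4-cycle `0 1 2 3 0` together with a hub `4` joined to all of them. -/
def wheel4 : SimpleGraph (Fin 5) :=
  SimpleGraph.fromEdgeSet
    {s(0, 1), s(1, 2), s(2, 3), s(3, 0), s(4, 0), s(4, 1), s(4, 2), s(4, 3)}

section AUX
open Walk
variable {V : Type*} {G : SimpleGraph V}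

lemma cycle_not_in_path [DecidableEq V] {u v : V} (p : G.Walk u v) (hp : p.IsPath) :
    ∀ {w : V} (c : G.Walk w w), c.IsCycle → ¬ (∀ e ∈ c.edges, e ∈ p.edges) := by
  induction p with
  | nil =>
    intro w c hc hsub
    have h3 := hc.three_le_length
    have hne : c.edges ≠ [] := by
      intro h
      have := c.length_edges
      rw [h] at this
      simp at this
      omega
    obtain ⟨e, he⟩ := List.exists_mem_of_ne_nil _ hne
    simpa using hsub e he
  | @cons a b v hadj q ih =>
    intro w c hc hsub
    rw [cons_isPath_iff] at hp
    by_cases hmem : s(a, b) ∈ c.edges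
    · have ha : a ∈ c.support := Walk.fst_mem_support_of_mem_edges c hmem
      have hc'c : (c.rotate a ha).IsCycle := hc.rotate ha
      have hlen : 3 ≤ (c.rotate a ha).length := hc'c.three_le_length
      have hedges : ∀ e ∈ (c.rotate a ha).edges, e ∈ s(a,b) :: q.edges := by
        intro e he
        have : e ∈ c.edges := (rotate_edges c a ha).mem_iff.mp he
        simpa using hsub e this
      have hnn : ¬ (c.rotate a ha).Nil := hc'c.not_nil
      obtain ⟨x, h1, r, hr⟩ := not_nil_iff.mp hnn
      rw [hr] at hc'c hedges hlen
      rw [Walk.cons_isCycle_iff] at hc'c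
      obtain ⟨hrpath, hre⟩ := hc'c
      have hax : s(a, x) ∈ s(a,b) :: q.edges := hedges _ (by simp)
      have hxb : x = b := by
        rcases List.mem_cons.mp hax with h | h
        · rcases Sym2.eq_iff.mp h with ⟨_, h⟩ | ⟨h, _⟩
          · exact h
          · exact absurd (h ▸ hadj) (by simp)
        · exact absurd (Walk.fst_mem_support_of_mem_edges q h) hp.2
      subst hxb
      have hrq : ∀ e ∈ r.edges, e ∈ q.edges := by
        intro e he
        rcases List.mem_cons.mp (hedges e (by simp [he])) with h | h
        · exact absurd (h ▸ he) hre
        · exact h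
      have hrnn : ¬ r.Nil := by
        rw [nil_iff_length_eq]
        simp at hlen
        omega
      have hrev : ¬ r.reverse.Nil := by
        rw [nil_iff_length_eq] at hrnn ⊢
        simpa using hrnn
      obtain ⟨y, h2, r2, hr2⟩ := not_nil_iff.mp hrev
      have : s(a, y) ∈ r.edges := by
        have : s(a, y) ∈ r.reverse.edges := by rw [hr2]; simp
        simpa using this
      exact hp.2 (Walk.fst_mem_support_of_mem_edges q (hrq _ this))
    · exact ih hp.1 c hc fun e he => by
        have h2 := hsub e he
        simp only [edges_cons, List.mem_cons] at h2
        rcases h2 with h | h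
        · exact absurd (h ▸ he) hmem
        · exact h

lemma coe_edge_mem {T : G.Subgraph} {e : Sym2 T.verts} (he : e ∈ T.coe.edgeSet) :
    Sym2.map Subtype.val e ∈ T.edgeSet := by
  induction e with
  | _ a b => exact he

lemma isTree_toSubgraph_coe [DecidableEq V] {u v : V} (p : G.Walk u v) (hp : p.IsPath) :
    p.toSubgraph.coe.IsTree := by
  constructor
  · exact p.toSubgraph_connected.coe
  · intro w c hc
    have hinj : Function.Injective (Subtype.val : p.toSubgraph.verts → V) :=
      Subtype.val_injective
    have hc' : (c.map p.toSubgraph.hom).IsCycle := hc.map (by exact hinj)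
    refine cycle_not_in_path p hp _ hc' ?_
    intro e he
    rw [Walk.edges_map] at he
    obtain ⟨e0, he0, rfl⟩ := List.mem_map.mp he
    have : e0 ∈ p.toSubgraph.coe.edgeSet := Walk.edges_subset_edgeSet c he0
    have h2 := coe_edge_mem this
    rwa [Walk.mem_edges_toSubgraph] at h2

end AUX

lemma wheel4_adj (a b : Fin 5) : wheel4.Adj a b ↔
    (s(a,b) = s(0,1) ∨ s(a,b) = s(1,2) ∨ s(a,b) = s(2,3) ∨ s(a,b) = s(3,0) ∨
     s(a,b) = s(4,0) ∨ s(a,b) = s(4,1) ∨ s(a,b) = s(4,2) ∨ s(a,b) = s(4,3)) := by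
  rw [wheel4, fromEdgeSet_adj]
  simp only [Set.mem_insert_iff, Set.mem_singleton_iff]
  constructor
  · exact fun h => h.1
  · intro h
    refine ⟨h, ?_⟩
    rcases h with h|h|h|h|h|h|h|h <;>
      (rw [Sym2.eq_iff] at h; rcases h with ⟨rfl, rfl⟩ | ⟨rfl, rfl⟩ <;> decide)

instance : DecidableRel wheel4.Adj := fun a b => decidable_of_iff _ (wheel4_adj a b).symm

def mycol : Sym2 (Fin 5) → Fin 3 := fun e =>
  if e = s(0,1) then 2 else if e = s(1,2) then 0 else if e = s(2,3) then 1
  else if e = s(3,0) then 2 else if e = s(4,0) then 0 else if e = s(4,1) then 1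
  else if e = s(4,2) then 2 else 0

lemma rainbow_of_path {α : Type*} (c : Sym2 (Fin 5) → α) (S : Finset (Fin 5))
    {u v : Fin 5} (p : wheel4.Walk u v) (hp : p.IsPath)
    (hS : ∀ x ∈ S, x ∈ p.support)
    (hinj : ∀ a ∈ p.edges, ∀ b ∈ p.edges, c a = c b → a = b) :
    ∃ T : wheel4.Subgraph, (↑S : Set (Fin 5)) ⊆ T.verts ∧ T.coe.IsTree ∧
      Set.InjOn c T.edgeSet := by
  refine ⟨p.toSubgraph, ?_, isTree_toSubgraph_coe p hp, ?_⟩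
  · rw [Walk.verts_toSubgraph]
    exact fun x hx => hS x hx
  · rw [Walk.edgeSet_toSubgraph]
    exact fun a ha b hb h => hinj a ha b hb h

lemma mycol_rainbow : IsRainbowColoring wheel4 mycol 3 := by
  intro S hS
  have h10 : S = {0,1,2} ∨ S = {0,1,3} ∨ S = {0,1,4} ∨ S = {0,2,3} ∨ S = {0,2,4} ∨
      S = {0,3,4} ∨ S = {1,2,3} ∨ S = {1,2,4} ∨ S = {1,3,4} ∨ S = {2,3,4} := by
    revert hS; revert S; decide
  rcases h10 with rfl|rfl|rfl|rfl|rfl|rfl|rfl|rfl|rfl|rfl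
  · exact rainbow_of_path mycol _
      (Walk.cons (by decide : wheel4.Adj 0 1) (Walk.cons (by decide : wheel4.Adj 1 2) Walk.nil))
      (by rw [Walk.isPath_def]; decide) (by decide) (by decide)
  · exact rainbow_of_path mycol _
      (Walk.cons (by decide : wheel4.Adj 3 2) (Walk.cons (by decide : wheel4.Adj 2 1)
        (Walk.cons (by decide : wheel4.Adj 1 0) Walk.nil)))
      (by rw [Walk.isPath_def]; decide) (by decide) (by decide)
  · exact rainbow_of_path mycol _
      (Walk.cons (by decide : wheel4.Adj 0 4) (Walk.cons (by decide : wheel4.Adj 4 1) Walk.nil))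
      (by rw [Walk.isPath_def]; decide) (by decide) (by decide)
  · exact rainbow_of_path mycol _
      (Walk.cons (by decide : wheel4.Adj 0 3) (Walk.cons (by decide : wheel4.Adj 3 2) Walk.nil))
      (by rw [Walk.isPath_def]; decide) (by decide) (by decide)
  · exact rainbow_of_path mycol _
      (Walk.cons (by decide : wheel4.Adj 0 4) (Walk.cons (by decide : wheel4.Adj 4 2) Walk.nil))
      (by rw [Walk.isPath_def]; decide) (by decide) (by decide)
  · exact rainbow_of_path mycol _
      (Walk.cons (by decide : wheel4.Adj 3 0) (Walk.cons (by decide : wheel4.Adj 0 4) Walk.nil))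
      (by rw [Walk.isPath_def]; decide) (by decide) (by decide)
  · exact rainbow_of_path mycol _
      (Walk.cons (by decide : wheel4.Adj 1 2) (Walk.cons (by decide : wheel4.Adj 2 3) Walk.nil))
      (by rw [Walk.isPath_def]; decide) (by decide) (by decide)
  · exact rainbow_of_path mycol _
      (Walk.cons (by decide : wheel4.Adj 1 4) (Walk.cons (by decide : wheel4.Adj 4 2) Walk.nil))
      (by rw [Walk.isPath_def]; decide) (by decide) (by decide)
  · exact rainbow_of_path mycol _
      (Walk.cons (by decide : wheel4.Adj 1 4) (Walk.cons (by decide : wheel4.Adj 4 3) Walk.nil))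
      (by rw [Walk.isPath_def]; decide) (by decide) (by decide)
  · exact rainbow_of_path mycol _
      (Walk.cons (by decide : wheel4.Adj 2 4) (Walk.cons (by decide : wheel4.Adj 4 3) Walk.nil))
      (by rw [Walk.isPath_def]; decide) (by decide) (by decide)

section LOWER
variable {V : Type*} [Fintype V] {G : SimpleGraph V}

set_option linter.unreachableTactic false in
set_option linter.unusedTactic false in
lemma extract_two_edges {q : ℕ} (hq : q ≤ 2) (c : Sym2 V → Fin q)
    (S : Finset V) (hS : S.card = 3) (T : G.Subgraph)
    (hsub : (↑S : Set V) ⊆ T.verts) (ht : T.coe.IsTree)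
    (hinj : Set.InjOn c T.edgeSet) :
    ∃ e1 e2 : Sym2 V, e1 ≠ e2 ∧ e1 ∈ G.edgeSet ∧ e2 ∈ G.edgeSet ∧
      (∀ x ∈ e1, x ∈ S) ∧ (∀ x ∈ e2, x ∈ S) ∧ c e1 ≠ c e2 := by
  classical
  haveI : Fintype T.verts := (Set.toFinite T.verts).fintype
  haveI : Fintype T.coe.edgeSet := (Set.toFinite _).fintype
  have hcard := ht.card_edgeFinset
  -- each edge of the coe graph maps into T.edgeSet
  have hmapmem : ∀ e ∈ T.coe.edgeSet, Sym2.map Subtype.val e ∈ T.edgeSet := by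
    intro e he
    induction e with
    | _ a b => exact he
  have hmapinj : Function.Injective (Sym2.map (Subtype.val : T.verts → V)) :=
    Sym2.map.injective Subtype.val_injective
  -- injective coloring of the coe edges
  have hφ : Function.Injective
      (fun e : T.coe.edgeSet => c (Sym2.map Subtype.val e.1)) := by
    intro e1 e2 h
    have h1 := hmapmem e1.1 e1.2
    have h2 := hmapmem e2.1 e2.2
    exact Subtype.ext (hmapinj (hinj h1 h2 h))
  have hEq : Fintype.card T.coe.edgeSet ≤ q := by
    simpa using Fintype.card_le_of_injective _ hφ
  have hEfin : T.coe.edgeFinset.card = Fintype.card T.coe.edgeSet :=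
    SimpleGraph.edgeFinset_card
  have hverts3 : 3 ≤ Fintype.card T.verts := by
    have h1 : (↑S : Set V).ncard ≤ T.verts.ncard :=
      Set.ncard_le_ncard hsub (Set.toFinite _)
    rw [Set.ncard_coe_finset, hS] at h1
    rwa [Set.ncard_eq_toFinset_card', Set.toFinset_card] at h1
  have hverts_eq : T.verts = ↑S := by
    refine (Set.eq_of_subset_of_ncard_le hsub ?_ (Set.toFinite _)).symm
    rw [Set.ncard_coe_finset, hS, Set.ncard_eq_toFinset_card', Set.toFinset_card]
    omega
  have hE2 : 1 < T.coe.edgeFinset.card := by omega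
  obtain ⟨a, ha, b, hb, hab⟩ := Finset.one_lt_card.mp hE2
  rw [SimpleGraph.mem_edgeFinset] at ha hb
  refine ⟨Sym2.map Subtype.val a, Sym2.map Subtype.val b, fun h => hab (hmapinj h),
    T.edgeSet_subset (hmapmem a ha), T.edgeSet_subset (hmapmem b hb), ?_, ?_, ?_⟩
  · intro x hx
    induction a with
    | _ a1 a2 =>
      simp only [Sym2.map_pair_eq, Sym2.mem_iff] at hx
      rcases hx with rfl | rfl
      · exact Finset.mem_coe.mp (subset_of_eq hverts_eq a1.2)
      · exact Finset.mem_coe.mp (subset_of_eq hverts_eq a2.2)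
  · intro x hx
    induction b with
    | _ b1 b2 =>
      simp only [Sym2.map_pair_eq, Sym2.mem_iff] at hx
      rcases hx with rfl | rfl
      · exact Finset.mem_coe.mp (subset_of_eq hverts_eq b1.2)
      · exact Finset.mem_coe.mp (subset_of_eq hverts_eq b2.2)
  · intro h
    exact hab (hmapinj (hinj (hmapmem a ha) (hmapmem b hb) h))

lemma edge_id (S : Finset (Fin 5)) (E : List (Sym2 (Fin 5)))
    (hkey : ∀ a b : Fin 5, wheel4.Adj a b → a ∈ S → b ∈ S → s(a,b) ∈ E) :
    ∀ e ∈ wheel4.edgeSet, (∀ x ∈ e, x ∈ S) → e ∈ E := by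
  intro e
  induction e with
  | _ a b =>
    intro he hm
    exact hkey a b (wheel4.mem_edgeSet.mp he) (hm a (by simp)) (hm b (by simp))

lemma lower_bound {q : ℕ} (hq : q ≤ 2) (c : Sym2 (Fin 5) → Fin q)
    (hc : IsRainbowColoring wheel4 c 3) : False := by
  have f1 : (c s(0,1)).val ≠ (c s(1,2)).val := by
    obtain ⟨T, h1, h2, h3⟩ := hc ({0,1,2} : Finset (Fin 5)) (by decide)
    obtain ⟨e1, e2, hne, hw1, hw2, hm1, hm2, hcc⟩ :=
      extract_two_edges hq c _ (by decide) T h1 h2 h3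
    have k := edge_id ({0,1,2} : Finset (Fin 5)) [s(0,1), s(1,2)] (by decide)
    have he1 := k e1 hw1 hm1
    have he2 := k e2 hw2 hm2
    simp only [List.mem_cons, List.not_mem_nil, or_false] at he1 he2
    rcases he1 with rfl|rfl <;> rcases he2 with rfl|rfl <;>
      first
        | exact absurd rfl hne
        | exact Or.inl (Fin.val_ne_of_ne hcc)
        | exact Or.inl (Fin.val_ne_of_ne hcc.symm)
        | exact Or.inr (Or.inl (Fin.val_ne_of_ne hcc))
        | exact Or.inr (Or.inl (Fin.val_ne_of_ne hcc.symm))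
        | exact Or.inr (Or.inr (Fin.val_ne_of_ne hcc))
        | exact Or.inr (Or.inr (Fin.val_ne_of_ne hcc.symm))
        | exact Fin.val_ne_of_ne hcc
        | exact Fin.val_ne_of_ne hcc.symm
  have f2 : (c s(1,2)).val ≠ (c s(2,3)).val := by
    obtain ⟨T, h1, h2, h3⟩ := hc ({1,2,3} : Finset (Fin 5)) (by decide)
    obtain ⟨e1, e2, hne, hw1, hw2, hm1, hm2, hcc⟩ :=
      extract_two_edges hq c _ (by decide) T h1 h2 h3
    have k := edge_id ({1,2,3} : Finset (Fin 5)) [s(1,2), s(2,3)] (by decide)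
    have he1 := k e1 hw1 hm1
    have he2 := k e2 hw2 hm2
    simp only [List.mem_cons, List.not_mem_nil, or_false] at he1 he2
    rcases he1 with rfl|rfl <;> rcases he2 with rfl|rfl <;>
      first
        | exact absurd rfl hne
        | exact Or.inl (Fin.val_ne_of_ne hcc)
        | exact Or.inl (Fin.val_ne_of_ne hcc.symm)
        | exact Or.inr (Or.inl (Fin.val_ne_of_ne hcc))
        | exact Or.inr (Or.inl (Fin.val_ne_of_ne hcc.symm))
        | exact Or.inr (Or.inr (Fin.val_ne_of_ne hcc))
        | exact Or.inr (Or.inr (Fin.val_ne_of_ne hcc.symm))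
        | exact Fin.val_ne_of_ne hcc
        | exact Fin.val_ne_of_ne hcc.symm
  have f3 : (c s(2,3)).val ≠ (c s(3,0)).val := by
    obtain ⟨T, h1, h2, h3⟩ := hc ({0,2,3} : Finset (Fin 5)) (by decide)
    obtain ⟨e1, e2, hne, hw1, hw2, hm1, hm2, hcc⟩ :=
      extract_two_edges hq c _ (by decide) T h1 h2 h3
    have k := edge_id ({0,2,3} : Finset (Fin 5)) [s(2,3), s(3,0)] (by decide)
    have he1 := k e1 hw1 hm1
    have he2 := k e2 hw2 hm2
    simp only [List.mem_cons, List.not_mem_nil, or_false] at he1 he2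
    rcases he1 with rfl|rfl <;> rcases he2 with rfl|rfl <;>
      first
        | exact absurd rfl hne
        | exact Or.inl (Fin.val_ne_of_ne hcc)
        | exact Or.inl (Fin.val_ne_of_ne hcc.symm)
        | exact Or.inr (Or.inl (Fin.val_ne_of_ne hcc))
        | exact Or.inr (Or.inl (Fin.val_ne_of_ne hcc.symm))
        | exact Or.inr (Or.inr (Fin.val_ne_of_ne hcc))
        | exact Or.inr (Or.inr (Fin.val_ne_of_ne hcc.symm))
        | exact Fin.val_ne_of_ne hcc
        | exact Fin.val_ne_of_ne hcc.symm
  have f4 : (c s(0,1)).val ≠ (c s(3,0)).val := by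
    obtain ⟨T, h1, h2, h3⟩ := hc ({0,1,3} : Finset (Fin 5)) (by decide)
    obtain ⟨e1, e2, hne, hw1, hw2, hm1, hm2, hcc⟩ :=
      extract_two_edges hq c _ (by decide) T h1 h2 h3
    have k := edge_id ({0,1,3} : Finset (Fin 5)) [s(0,1), s(3,0)] (by decide)
    have he1 := k e1 hw1 hm1
    have he2 := k e2 hw2 hm2
    simp only [List.mem_cons, List.not_mem_nil, or_false] at he1 he2
    rcases he1 with rfl|rfl <;> rcases he2 with rfl|rfl <;>
      first
        | exact absurd rfl hne
        | exact Or.inl (Fin.val_ne_of_ne hcc)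
        | exact Or.inl (Fin.val_ne_of_ne hcc.symm)
        | exact Or.inr (Or.inl (Fin.val_ne_of_ne hcc))
        | exact Or.inr (Or.inl (Fin.val_ne_of_ne hcc.symm))
        | exact Or.inr (Or.inr (Fin.val_ne_of_ne hcc))
        | exact Or.inr (Or.inr (Fin.val_ne_of_ne hcc.symm))
        | exact Fin.val_ne_of_ne hcc
        | exact Fin.val_ne_of_ne hcc.symm
  have f5 : (c s(4,0)).val ≠ (c s(4,2)).val := by
    obtain ⟨T, h1, h2, h3⟩ := hc ({0,2,4} : Finset (Fin 5)) (by decide)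
    obtain ⟨e1, e2, hne, hw1, hw2, hm1, hm2, hcc⟩ :=
      extract_two_edges hq c _ (by decide) T h1 h2 h3
    have k := edge_id ({0,2,4} : Finset (Fin 5)) [s(4,0), s(4,2)] (by decide)
    have he1 := k e1 hw1 hm1
    have he2 := k e2 hw2 hm2
    simp only [List.mem_cons, List.not_mem_nil, or_false] at he1 he2
    rcases he1 with rfl|rfl <;> rcases he2 with rfl|rfl <;>
      first
        | exact absurd rfl hne
        | exact Or.inl (Fin.val_ne_of_ne hcc)
        | exact Or.inl (Fin.val_ne_of_ne hcc.symm)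
        | exact Or.inr (Or.inl (Fin.val_ne_of_ne hcc))
        | exact Or.inr (Or.inl (Fin.val_ne_of_ne hcc.symm))
        | exact Or.inr (Or.inr (Fin.val_ne_of_ne hcc))
        | exact Or.inr (Or.inr (Fin.val_ne_of_ne hcc.symm))
        | exact Fin.val_ne_of_ne hcc
        | exact Fin.val_ne_of_ne hcc.symm
  have f6 : (c s(4,1)).val ≠ (c s(4,3)).val := by
    obtain ⟨T, h1, h2, h3⟩ := hc ({1,3,4} : Finset (Fin 5)) (by decide)
    obtain ⟨e1, e2, hne, hw1, hw2, hm1, hm2, hcc⟩ :=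
      extract_two_edges hq c _ (by decide) T h1 h2 h3
    have k := edge_id ({1,3,4} : Finset (Fin 5)) [s(4,1), s(4,3)] (by decide)
    have he1 := k e1 hw1 hm1
    have he2 := k e2 hw2 hm2
    simp only [List.mem_cons, List.not_mem_nil, or_false] at he1 he2
    rcases he1 with rfl|rfl <;> rcases he2 with rfl|rfl <;>
      first
        | exact absurd rfl hne
        | exact Or.inl (Fin.val_ne_of_ne hcc)
        | exact Or.inl (Fin.val_ne_of_ne hcc.symm)
        | exact Or.inr (Or.inl (Fin.val_ne_of_ne hcc))
        | exact Or.inr (Or.inl (Fin.val_ne_of_ne hcc.symm))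
        | exact Or.inr (Or.inr (Fin.val_ne_of_ne hcc))
        | exact Or.inr (Or.inr (Fin.val_ne_of_ne hcc.symm))
        | exact Fin.val_ne_of_ne hcc
        | exact Fin.val_ne_of_ne hcc.symm
  have g1 : (c s(0,1)).val ≠ (c s(4,0)).val ∨ (c s(0,1)).val ≠ (c s(4,1)).val ∨ (c s(4,0)).val ≠ (c s(4,1)).val := by
    obtain ⟨T, h1, h2, h3⟩ := hc ({0,1,4} : Finset (Fin 5)) (by decide)
    obtain ⟨e1, e2, hne, hw1, hw2, hm1, hm2, hcc⟩ :=
      extract_two_edges hq c _ (by decide) T h1 h2 h3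
    have k := edge_id ({0,1,4} : Finset (Fin 5)) [s(0,1), s(4,0), s(4,1)] (by decide)
    have he1 := k e1 hw1 hm1
    have he2 := k e2 hw2 hm2
    simp only [List.mem_cons, List.not_mem_nil, or_false] at he1 he2
    rcases he1 with rfl|rfl|rfl <;> rcases he2 with rfl|rfl|rfl <;>
      first
        | exact absurd rfl hne
        | exact Or.inl (Fin.val_ne_of_ne hcc)
        | exact Or.inl (Fin.val_ne_of_ne hcc.symm)
        | exact Or.inr (Or.inl (Fin.val_ne_of_ne hcc))
        | exact Or.inr (Or.inl (Fin.val_ne_of_ne hcc.symm))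
        | exact Or.inr (Or.inr (Fin.val_ne_of_ne hcc))
        | exact Or.inr (Or.inr (Fin.val_ne_of_ne hcc.symm))
        | exact Fin.val_ne_of_ne hcc
        | exact Fin.val_ne_of_ne hcc.symm
  have g2 : (c s(1,2)).val ≠ (c s(4,1)).val ∨ (c s(1,2)).val ≠ (c s(4,2)).val ∨ (c s(4,1)).val ≠ (c s(4,2)).val := by
    obtain ⟨T, h1, h2, h3⟩ := hc ({1,2,4} : Finset (Fin 5)) (by decide)
    obtain ⟨e1, e2, hne, hw1, hw2, hm1, hm2, hcc⟩ :=
      extract_two_edges hq c _ (by decide) T h1 h2 h3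
    have k := edge_id ({1,2,4} : Finset (Fin 5)) [s(1,2), s(4,1), s(4,2)] (by decide)
    have he1 := k e1 hw1 hm1
    have he2 := k e2 hw2 hm2
    simp only [List.mem_cons, List.not_mem_nil, or_false] at he1 he2
    rcases he1 with rfl|rfl|rfl <;> rcases he2 with rfl|rfl|rfl <;>
      first
        | exact absurd rfl hne
        | exact Or.inl (Fin.val_ne_of_ne hcc)
        | exact Or.inl (Fin.val_ne_of_ne hcc.symm)
        | exact Or.inr (Or.inl (Fin.val_ne_of_ne hcc))
        | exact Or.inr (Or.inl (Fin.val_ne_of_ne hcc.symm))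
        | exact Or.inr (Or.inr (Fin.val_ne_of_ne hcc))
        | exact Or.inr (Or.inr (Fin.val_ne_of_ne hcc.symm))
        | exact Fin.val_ne_of_ne hcc
        | exact Fin.val_ne_of_ne hcc.symm
  have g3 : (c s(2,3)).val ≠ (c s(4,2)).val ∨ (c s(2,3)).val ≠ (c s(4,3)).val ∨ (c s(4,2)).val ≠ (c s(4,3)).val := by
    obtain ⟨T, h1, h2, h3⟩ := hc ({2,3,4} : Finset (Fin 5)) (by decide)
    obtain ⟨e1, e2, hne, hw1, hw2, hm1, hm2, hcc⟩ :=
      extract_two_edges hq c _ (by decide) T h1 h2 h3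
    have k := edge_id ({2,3,4} : Finset (Fin 5)) [s(2,3), s(4,2), s(4,3)] (by decide)
    have he1 := k e1 hw1 hm1
    have he2 := k e2 hw2 hm2
    simp only [List.mem_cons, List.not_mem_nil, or_false] at he1 he2
    rcases he1 with rfl|rfl|rfl <;> rcases he2 with rfl|rfl|rfl <;>
      first
        | exact absurd rfl hne
        | exact Or.inl (Fin.val_ne_of_ne hcc)
        | exact Or.inl (Fin.val_ne_of_ne hcc.symm)
        | exact Or.inr (Or.inl (Fin.val_ne_of_ne hcc))
        | exact Or.inr (Or.inl (Fin.val_ne_of_ne hcc.symm))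
        | exact Or.inr (Or.inr (Fin.val_ne_of_ne hcc))
        | exact Or.inr (Or.inr (Fin.val_ne_of_ne hcc.symm))
        | exact Fin.val_ne_of_ne hcc
        | exact Fin.val_ne_of_ne hcc.symm
  have g4 : (c s(3,0)).val ≠ (c s(4,0)).val ∨ (c s(3,0)).val ≠ (c s(4,3)).val ∨ (c s(4,0)).val ≠ (c s(4,3)).val := by
    obtain ⟨T, h1, h2, h3⟩ := hc ({0,3,4} : Finset (Fin 5)) (by decide)
    obtain ⟨e1, e2, hne, hw1, hw2, hm1, hm2, hcc⟩ :=
      extract_two_edges hq c _ (by decide) T h1 h2 h3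
    have k := edge_id ({0,3,4} : Finset (Fin 5)) [s(3,0), s(4,0), s(4,3)] (by decide)
    have he1 := k e1 hw1 hm1
    have he2 := k e2 hw2 hm2
    simp only [List.mem_cons, List.not_mem_nil, or_false] at he1 he2
    rcases he1 with rfl|rfl|rfl <;> rcases he2 with rfl|rfl|rfl <;>
      first
        | exact absurd rfl hne
        | exact Or.inl (Fin.val_ne_of_ne hcc)
        | exact Or.inl (Fin.val_ne_of_ne hcc.symm)
        | exact Or.inr (Or.inl (Fin.val_ne_of_ne hcc))
        | exact Or.inr (Or.inl (Fin.val_ne_of_ne hcc.symm))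
        | exact Or.inr (Or.inr (Fin.val_ne_of_ne hcc))
        | exact Or.inr (Or.inr (Fin.val_ne_of_ne hcc.symm))
        | exact Fin.val_ne_of_ne hcc
        | exact Fin.val_ne_of_ne hcc.symm
  have b1 := (c s(0,1)).isLt
  have b2 := (c s(1,2)).isLt
  have b3 := (c s(2,3)).isLt
  have b4 := (c s(3,0)).isLt
  have b5 := (c s(4,0)).isLt
  have b6 := (c s(4,1)).isLt
  have b7 := (c s(4,2)).isLt
  have b8 := (c s(4,3)).isLt
  rcases g1 with g1|g1|g1 <;> rcases g2 with g2|g2|g2 <;> rcases g3 with g3|g3|g3 <;>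
    rcases g4 with g4|g4|g4 <;> omega

end LOWER

theorem stmt_18 : rxk wheel4 3 = 3 := by
  refine le_antisymm (Nat.sInf_le ⟨mycol, mycol_rainbow⟩) ?_
  refine le_csInf ⟨3, mycol, mycol_rainbow⟩ ?_
  rintro q ⟨c, hcq⟩
  by_contra h
  push_neg at h
  exact lower_bound (by omega) c hcq
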